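/- arXiv:2303.10486 — 3 statements merged into one kernel-verified Lean document; each statement's English description precedes it below -/
import Mathlib

section
/- Let k be a field, R = k[x_1,…,x_d], and L a lex-segment ideal of height g with 2 ≤ g < d generated in a single degree δ ≥ 2. Then L can be written as L = I + x_g·L', where I is a monomial ideal contained in (x_1,…,x_{g-1}) satisfying (x_1,…,x_{g-1})·m^{δ-1} ⊆ I, where m = (x_1,…,x_d), and L' is a monomial ideal whose generators involve only the variables x_g,…,x_d. -/
open MvPolynomial

/-- Total degree of an exponent vector. -/
def mdeg {d : ℕ} (v : Fin d →₀ ℕ) : ℕ := v.sum fun _ n => n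

/-- Lexicographic comparison of monomials, with `x_1 > x_2 > ⋯ > x_d`. -/
def lexLt {d : ℕ} (u w : Fin d →₀ ℕ) : Prop :=
  ∃ i : Fin d, u i < w i ∧ ∀ j : Fin d, j < i → u j = w j

/-- Lex-segment ideal generated in degree `δ`. -/
def IsLexSegment {d : ℕ} {k : Type*} [Field k] (δ : ℕ)
    (L : Ideal (MvPolynomial (Fin d) k)) : Prop :=
  (∃ S : Set (Fin d →₀ ℕ), (∀ v ∈ S, mdeg v = δ) ∧
    L = Ideal.span ((fun v => monomial v (1 : k)) '' S)) ∧
  ∀ u w : Fin d →₀ ℕ, mdeg u = δ → mdeg w = δ → monomial u (1 : k) ∈ L →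
    lexLt u w → monomial w (1 : k) ∈ L

/-- `I` is a monomial ideal. -/
def IsMonomialIdeal {d : ℕ} {k : Type*} [Field k]
    (I : Ideal (MvPolynomial (Fin d) k)) : Prop :=
  ∃ S : Set (Fin d →₀ ℕ), I = Ideal.span ((fun v => monomial v (1 : k)) '' S)

/-- Height of an ideal: infimum of the heights of the primes containing it. -/
noncomputable def idealHeight {R : Type*} [CommRing R] (I : Ideal R) : ℕ∞ :=
  ⨅ p ∈ {p : PrimeSpectrum R | I ≤ p.asIdeal}, Order.height p

namespace Aux

lemma mdeg_eq_sum {d : ℕ} (v : Fin d →₀ ℕ) : mdeg v = ∑ i, v i := by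
  rw [mdeg, Finsupp.sum_fintype]
  intro i; rfl

lemma mdeg_single {d : ℕ} (i : Fin d) (n : ℕ) : mdeg (Finsupp.single i n) = n := by
  simp [mdeg, Finsupp.sum_single_index]

lemma mdeg_add {d : ℕ} (u v : Fin d →₀ ℕ) : mdeg (u + v) = mdeg u + mdeg v := by
  simp [mdeg_eq_sum, Finset.sum_add_distrib]

lemma le_mdeg {d : ℕ} (v : Fin d →₀ ℕ) (i : Fin d) : v i ≤ mdeg v := by
  rw [mdeg_eq_sum]
  exact Finset.single_le_sum (f := fun j => v j) (fun _ _ => Nat.zero_le _) (Finset.mem_univ i)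

lemma mdeg_eq_zero {d : ℕ} {v : Fin d →₀ ℕ} (h : mdeg v = 0) : v = 0 := by
  ext i
  have := le_mdeg v i
  simp only [Finsupp.coe_zero, Pi.zero_apply]
  omega

lemma lex_total {d : ℕ} {u w : Fin d →₀ ℕ} (h : u ≠ w) : lexLt u w ∨ lexLt w u := by
  classical
  set t : Finset (Fin d) := Finset.univ.filter (fun i => ¬ (u i = w i)) with ht
  have hne : t.Nonempty := by
    by_contra hc
    rw [Finset.not_nonempty_iff_eq_empty, Finset.filter_eq_empty_iff] at hc
    exact h (Finsupp.ext fun i => by_contra fun hi => hc (Finset.mem_univ i) hi)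
  set i0 := t.min' hne with hi0
  have hmem : ¬ (u i0 = w i0) := (Finset.mem_filter.mp (t.min'_mem hne)).2
  have hbelow : ∀ j : Fin d, j < i0 → u j = w j := by
    intro j hj
    by_contra hc
    have : i0 ≤ j := t.min'_le j (Finset.mem_filter.mpr ⟨Finset.mem_univ _, hc⟩)
    omega
  rcases lt_or_gt_of_ne hmem with hlt | hgt
  · exact Or.inl ⟨i0, hlt, hbelow⟩
  · exact Or.inr ⟨i0, hgt, fun j hj => (hbelow j hj).symm⟩

/-- if v i = mdeg v then v = single -/
lemma eq_single_of_apply_eq_mdeg {d : ℕ} {v : Fin d →₀ ℕ} {i : Fin d} (h : v i = mdeg v) :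
    v = Finsupp.single i (mdeg v) := by
  ext j
  rcases eq_or_ne j i with rfl | hj
  · simp [h]
  · have hsum := mdeg_eq_sum v
    have : ∑ l, v l = v i + ∑ l ∈ Finset.univ.erase i, v l := by
      rw [Finset.add_sum_erase _ _ (Finset.mem_univ i)]
    have hz : ∑ l ∈ Finset.univ.erase i, v l = 0 := by omega
    have := Finset.sum_eq_zero_iff.mp hz j (Finset.mem_erase.2 ⟨hj, Finset.mem_univ _⟩)
    simp [Finsupp.single_apply, Ne.symm hj, this]

section Prime
variable {d : ℕ} {k : Type*} [Field k]

noncomputable def killer (s : Set (Fin d)) : MvPolynomial (Fin d) k →ₐ[k] MvPolynomial (Fin d) k :=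
  aeval (fun i => by classical exact if i ∈ s then 0 else X i)

lemma sub_killer_mem (s : Set (Fin d)) (f : MvPolynomial (Fin d) k) :
    f - killer s f ∈ Ideal.span (X '' s : Set (MvPolynomial (Fin d) k)) := by
  classical
  induction f using MvPolynomial.induction_on' with
  | monomial u a =>
    by_cases h : ∃ i ∈ s, u i ≠ 0
    · have h1 : (monomial u) a ∈ Ideal.span (X '' s : Set (MvPolynomial (Fin d) k)) := by
        rw [mem_ideal_span_X_image]
        intro m hm
        rw [support_monomial] at hm
        rcases eq_or_ne a 0 with rfl | ha
        · simp at hm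
        · simp [ha] at hm
          subst hm
          exact h
      have h2 : killer s ((monomial u) a) = 0 := by
        rw [killer, aeval_monomial]
        obtain ⟨i, his, hui⟩ := h
        rw [Finsupp.prod]
        have : ∏ j ∈ u.support, (if j ∈ s then (0:MvPolynomial (Fin d) k) else X j) ^ u j = 0 := by
          apply Finset.prod_eq_zero (Finsupp.mem_support_iff.2 hui)
          simp [his, zero_pow hui]
        simp only [this, mul_zero]
      rw [h2, sub_zero]; exact h1
    · push_neg at h
      have h2 : killer s ((monomial u) a) = monomial u a := by
        rw [killer, aeval_monomial]
        have : (u.prod fun i n => (if i ∈ s then (0:MvPolynomial (Fin d) k) else X i) ^ n)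
            = u.prod fun i n => (X i) ^ n := by
          apply Finsupp.prod_congr
          intro i hi
          rw [if_neg]
          intro his
          exact (Finsupp.mem_support_iff.1 hi) (h i his)
        rw [this, monomial_eq]
        rfl
      rw [h2, sub_self]
      exact Ideal.zero_mem _
  | add p q hp hq =>
    have : p + q - killer s (p + q) = (p - killer s p) + (q - killer s q) := by
      rw [map_add]; ring
    rw [this]
    exact Ideal.add_mem _ hp hq

lemma spanX_eq_ker (s : Set (Fin d)) :
    Ideal.span (X '' s : Set (MvPolynomial (Fin d) k)) = RingHom.ker (killer s (k := k) (d := d)).toRingHom := by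
  classical
  apply le_antisymm
  · rw [Ideal.span_le]
    rintro _ ⟨i, his, rfl⟩
    simp only [SetLike.mem_coe, RingHom.mem_ker]
    show killer s (X i) = 0
    rw [killer, aeval_X, if_pos his]
  · intro f hf
    rw [RingHom.mem_ker] at hf
    have := sub_killer_mem s f
    rw [show killer s f = (killer s (k := k) (d := d)).toRingHom f from rfl, hf, sub_zero] at this
    exact this

lemma isPrime_spanX (s : Set (Fin d)) :
    (Ideal.span (X '' s : Set (MvPolynomial (Fin d) k))).IsPrime := by
  rw [spanX_eq_ker]
  exact RingHom.ker_isPrime _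

lemma X_notMem_spanX {s : Set (Fin d)} {i : Fin d} (hi : i ∉ s) :
    X i ∉ Ideal.span (X '' s : Set (MvPolynomial (Fin d) k)) := by
  rw [mem_ideal_span_X_image]
  push_neg
  refine ⟨Finsupp.single i 1, ?_, ?_⟩
  · rw [support_X]; exact Finset.mem_singleton_self _
  · intro j hj
    have hij : i ≠ j := fun h => hi (h ▸ hj)
    exact Finsupp.single_eq_of_ne' hij

end Prime

variable {d : ℕ} {k : Type*} [Field k]

lemma ps_lt {p q : PrimeSpectrum (MvPolynomial (Fin d) k)} (h : p.asIdeal < q.asIdeal) : p < q :=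
  lt_iff_le_not_ge.mpr ⟨h.le, fun hc => h.not_ge hc⟩

noncomputable def varPrime (d : ℕ) (k : Type*) [Field k] (n : ℕ) :
    PrimeSpectrum (MvPolynomial (Fin d) k) :=
  ⟨Ideal.span (X '' {i : Fin d | (i : ℕ) < n}), isPrime_spanX _⟩

lemma varPrime_strictmono {n m : ℕ} (h : n < m) (hm : n < d) :
    (varPrime d k n) < varPrime d k m := by
  apply ps_lt
  constructor
  · apply Ideal.span_mono
    apply Set.image_mono
    intro i hi
    exact lt_trans hi h
  · intro hc
    have hmem : X (⟨n, hm⟩ : Fin d) ∈ Ideal.span (X '' {i : Fin d | (i : ℕ) < m} : Set (MvPolynomial (Fin d) k)) :=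
      Ideal.subset_span ⟨⟨n, hm⟩, by simpa using h, rfl⟩
    exact X_notMem_spanX (by simp) (hc hmem)

lemma height_ge_of_vars {n : ℕ} (hn : n ≤ d) (p : PrimeSpectrum (MvPolynomial (Fin d) k))
    (hp : ∀ i : Fin d, (i : ℕ) < n → X i ∈ p.asIdeal) : (n : ℕ∞) ≤ Order.height p := by
  let c : LTSeries (PrimeSpectrum (MvPolynomial (Fin d) k)) :=
    ⟨n, fun j => varPrime d k (j : ℕ), fun j => by
      apply varPrime_strictmono
      · simp
      · simp only [Fin.coe_castSucc]; exact lt_of_lt_of_le j.2 hn⟩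
  have hlast : c.last ≤ p := by
    show (varPrime d k ((Fin.last n : Fin (n+1)) : ℕ)).asIdeal ≤ p.asIdeal
    rw [varPrime, Fin.val_last]
    apply Ideal.span_le.mpr
    rintro _ ⟨i, hi, rfl⟩
    exact hp i hi
  have := Order.length_le_height hlast
  simpa using this

/-- Algebraic independence of a family modulo an ideal. -/
def Indep (q : Ideal (MvPolynomial (Fin d) k)) {m : ℕ} (z : Fin m → MvPolynomial (Fin d) k) : Prop :=
  ∀ Q : MvPolynomial (Fin m) k, aeval z Q ∈ q → Q = 0

lemma indep_base {s : Set (Fin d)} {m : ℕ} (q : Ideal (MvPolynomial (Fin d) k))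
    (hq : q ≤ Ideal.span (X '' s)) (emb : Fin m → Fin d) (hemb : Function.Injective emb)
    (hrange : ∀ j, emb j ∉ s) : Indep q (fun j => X (emb j)) := by
  classical
  intro Q hQ
  by_contra hQ0
  have h1 : aeval (fun j => X (emb j)) Q = rename emb Q := by
    have := aeval_rename emb (X : Fin d → MvPolynomial (Fin d) k) Q
    rw [aeval_X_left_apply] at this
    exact this.symm
  rw [h1] at hQ
  have hne : rename emb Q ≠ 0 := fun h => hQ0 (rename_injective emb hemb (by rw [h, map_zero]))
  have hmem := hq hQ
  rw [mem_ideal_span_X_image] at hmem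
  obtain ⟨u, hu⟩ := Finset.nonempty_iff_ne_empty.mpr (fun h => hne (support_eq_empty.mp h))
  obtain ⟨i, his, hi⟩ := hmem u hu
  rw [support_rename_of_injective hemb, Finset.mem_image] at hu
  obtain ⟨v, _, rfl⟩ := hu
  have : i ∈ (Finsupp.mapDomain emb v).support := Finsupp.mem_support_iff.mpr hi
  have := Finsupp.mapDomain_support this
  rw [Finset.mem_image] at this
  obtain ⟨j, _, rfl⟩ := this
  exact hrange j his

lemma aeval_cons_eq {m : ℕ} (z : Fin m → MvPolynomial (Fin d) k) (f : MvPolynomial (Fin d) k)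
    (Q : MvPolynomial (Fin (m + 1)) k) :
    aeval (Fin.cons f z) Q =
      Polynomial.eval₂ ((aeval z : MvPolynomial (Fin m) k →ₐ[k] MvPolynomial (Fin d) k) :
        MvPolynomial (Fin m) k →+* MvPolynomial (Fin d) k) f (MvPolynomial.finSuccEquiv k m Q) := by
  have key : ((aeval (Fin.cons f z) : MvPolynomial (Fin (m+1)) k →ₐ[k] MvPolynomial (Fin d) k) :
        MvPolynomial (Fin (m+1)) k →+* MvPolynomial (Fin d) k)
      = (Polynomial.eval₂RingHom ((aeval z : MvPolynomial (Fin m) k →ₐ[k] MvPolynomial (Fin d) k) :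
          MvPolynomial (Fin m) k →+* MvPolynomial (Fin d) k) f).comp
        ((MvPolynomial.finSuccEquiv k m : MvPolynomial (Fin (m+1)) k ≃ₐ[k] Polynomial (MvPolynomial (Fin m) k)) :
          MvPolynomial (Fin (m+1)) k →+* Polynomial (MvPolynomial (Fin m) k)) := by
    apply MvPolynomial.ringHom_ext
    · intro c
      simp [MvPolynomial.finSuccEquiv_apply, Polynomial.eval₂_C]
    · intro i
      refine Fin.cases ?_ ?_ i
      · simp [MvPolynomial.finSuccEquiv_X_zero]
      · intro j
        simp [MvPolynomial.finSuccEquiv_X_succ]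
  have := RingHom.congr_fun key Q
  simpa using this

lemma poly_indep {m : ℕ} (q q' : Ideal (MvPolynomial (Fin d) k)) (hq : q.IsPrime)
    (z : Fin m → MvPolynomial (Fin d) k) (hz : Indep q' z) (hqq' : q ≤ q')
    (f : MvPolynomial (Fin d) k) (hf : f ∈ q') (hfq : f ∉ q) :
    ∀ p : Polynomial (MvPolynomial (Fin m) k),
      Polynomial.eval₂ ((aeval z : MvPolynomial (Fin m) k →ₐ[k] MvPolynomial (Fin d) k) :
        MvPolynomial (Fin m) k →+* MvPolynomial (Fin d) k) f p ∈ q → p = 0 := by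
  suffices H : ∀ (n : ℕ) (p : Polynomial (MvPolynomial (Fin m) k)), p.natDegree ≤ n →
      Polynomial.eval₂ ((aeval z : MvPolynomial (Fin m) k →ₐ[k] MvPolynomial (Fin d) k) :
        MvPolynomial (Fin m) k →+* MvPolynomial (Fin d) k) f p ∈ q → p = 0 by
    exact fun p => H p.natDegree p le_rfl
  set A : MvPolynomial (Fin m) k →+* MvPolynomial (Fin d) k :=
    ((aeval z : MvPolynomial (Fin m) k →ₐ[k] MvPolynomial (Fin d) k) :
      MvPolynomial (Fin m) k →+* MvPolynomial (Fin d) k) with hA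
  have hAz : ∀ c : MvPolynomial (Fin m) k, A c = aeval z c := fun c => rfl
  intro n
  induction n with
  | zero =>
    intro p hdeg hmem
    rw [Polynomial.eq_C_of_natDegree_le_zero hdeg] at hmem ⊢
    rw [Polynomial.eval₂_C, hAz] at hmem
    rw [hz _ (hqq' hmem)]
    simp
  | succ n ih =>
    intro p hdeg hmem
    have hdecomp := Polynomial.divX_mul_X_add p
    have heval : Polynomial.eval₂ A f p
        = Polynomial.eval₂ A f p.divX * f + aeval z (p.coeff 0) := by
      conv_lhs => rw [← hdecomp]
      rw [Polynomial.eval₂_add, Polynomial.eval₂_mul, Polynomial.eval₂_X, Polynomial.eval₂_C, hAz]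
    have hc0 : p.coeff 0 = 0 := by
      apply hz
      have h1 : aeval z (p.coeff 0) = Polynomial.eval₂ A f p - Polynomial.eval₂ A f p.divX * f := by
        rw [heval]; ring
      rw [h1]
      exact Ideal.sub_mem _ (hqq' hmem) (Ideal.mul_mem_left _ _ hf)
    have hdiv : Polynomial.eval₂ A f p.divX ∈ q := by
      have h2 : Polynomial.eval₂ A f p.divX * f ∈ q := by
        rw [heval, hc0] at hmem
        simpa using hmem
      rcases hq.mem_or_mem h2 with h | h
      · exact h
      · exact absurd h hfq
    have hdx : p.divX = 0 := by
      apply ih _ _ hdiv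
      have := Polynomial.natDegree_divX_eq_natDegree_tsub_one (p := p)
      omega
    rw [← hdecomp, hdx, hc0]
    simp

lemma indep_step {m : ℕ} (q q' : Ideal (MvPolynomial (Fin d) k)) (hq : q.IsPrime)
    (z : Fin m → MvPolynomial (Fin d) k) (hz : Indep q' z) (hqq' : q ≤ q')
    (f : MvPolynomial (Fin d) k) (hf : f ∈ q') (hfq : f ∉ q) :
    Indep q (Fin.cons f z) := by
  intro Q hQ
  rw [aeval_cons_eq] at hQ
  have := poly_indep q q' hq z hz hqq' f hf hfq _ hQ
  have h2 : MvPolynomial.finSuccEquiv k m Q = MvPolynomial.finSuccEquiv k m 0 := by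
    rw [this, map_zero]
  exact (MvPolynomial.finSuccEquiv k m).injective h2


variable {d : ℕ} {k : Type*} [Field k]

lemma indep_comp_cast {q : Ideal (MvPolynomial (Fin d) k)} {m m' : ℕ} (h : m' = m)
    (z : Fin m → MvPolynomial (Fin d) k) (hz : Indep q z) : Indep q (z ∘ Fin.cast h) := by
  intro Q hQ
  have h1 : aeval (z ∘ Fin.cast h) Q = aeval z (rename (Fin.cast h) Q) := by
    rw [aeval_rename]
  rw [h1] at hQ
  have := hz _ hQ
  have h2 : rename (Fin.cast h) Q = rename (Fin.cast h) 0 := by rw [this, map_zero]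
  exact rename_injective _ (Fin.cast_injective h) h2

lemma ps_lt_asIdeal {p q : PrimeSpectrum (MvPolynomial (Fin d) k)} (h : p < q) :
    p.asIdeal < q.asIdeal :=
  lt_iff_le_not_ge.mpr ⟨h.le, fun hc => h.not_ge hc⟩

lemma chain_indep (n : ℕ) :
    ∀ (c : LTSeries (PrimeSpectrum (MvPolynomial (Fin d) k))), c.length = n →
    ∀ {m : ℕ} (z : Fin m → MvPolynomial (Fin d) k), Indep c.last.asIdeal z →
    ∃ w : Fin (n + m) → MvPolynomial (Fin d) k, Indep c.head.asIdeal w := by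
  induction n with
  | zero =>
    intro c hc m z hz
    have hhead : c.head = c.last := by
      rw [RelSeries.head, RelSeries.last]
      congr 1
      ext
      simp [hc]
    refine ⟨z ∘ Fin.cast (by omega), ?_⟩
    rw [hhead]
    exact indep_comp_cast _ z hz
  | succ n ih =>
    intro c hc m z hz
    have hlen : c.length ≠ 0 := by omega
    have hrel : c.eraseLast.last < c.last := c.eraseLast_last_rel_last hlen
    obtain ⟨f, hf, hfq⟩ := SetLike.exists_of_lt (ps_lt_asIdeal hrel)
    have hstep : Indep c.eraseLast.last.asIdeal (Fin.cons f z) :=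
      indep_step c.eraseLast.last.asIdeal c.last.asIdeal c.eraseLast.last.2
        z hz (ps_lt_asIdeal hrel).le f hf hfq
    obtain ⟨w, hw⟩ := ih c.eraseLast (by simp [RelSeries.eraseLast]; omega) (Fin.cons f z) hstep
    rw [RelSeries.head_eraseLast] at hw
    exact ⟨w ∘ Fin.cast (by omega), indep_comp_cast _ w hw⟩

lemma no_indep_everything (w : Fin (d + 1) → MvPolynomial (Fin d) k)
    (hw : ∀ Q : MvPolynomial (Fin (d + 1)) k, aeval w Q = 0 → Q = 0) : False := by
  classical
  set D : ℕ := (Finset.univ.sup fun i => (w i).totalDegree) + 1 with hD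
  have hDpos : 1 ≤ D := Nat.le_add_left 1 _
  have hDbound : ∀ i, (w i).totalDegree ≤ D := by
    intro i
    have h0 : (w i).totalDegree ≤ Finset.univ.sup fun i => (w i).totalDegree :=
      Finset.le_sup (f := fun i => (w i).totalDegree) (Finset.mem_univ i)
    omega
  set C : ℕ := ((d + 1) * D) ^ d with hC
  have hCpos : 1 ≤ C := Nat.one_le_pow _ _ (by positivity)
  set N : ℕ := (d + 1) * C with hN
  set M : ℕ := N * D with hM
  -- the index type
  set tf : (Fin (d + 1) → Fin (C + 1)) → (Fin (d + 1) →₀ ℕ) :=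
    fun v => Finsupp.equivFunOnFinite.symm (fun i => (v i : ℕ)) with htf
  have htf_inj : Function.Injective tf := by
    intro a b hab
    funext i
    have := congrArg (fun (f : Fin (d+1) →₀ ℕ) => f i) hab
    simp [htf] at this
    exact Fin.ext this
  -- the linearly independent family
  set F : (Fin (d + 1) → Fin (C + 1)) → MvPolynomial (Fin d) k :=
    fun v => aeval w (monomial (tf v) (1:k)) with hF
  have hFli : LinearIndependent k F := by
    have h1 : LinearIndependent k (fun v : Fin (d+1) →₀ ℕ => (monomial v (1:k))) := by
      have := (basisMonomials (Fin (d+1)) k).linearIndependent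
      rwa [coe_basisMonomials] at this
    rw [hF]
    have h3 := LinearIndependent.map' (h1.comp tf htf_inj)
      (AlgHom.toLinearMap (aeval w : MvPolynomial (Fin (d+1)) k →ₐ[k] MvPolynomial (Fin d) k))
      (LinearMap.ker_eq_bot'.mpr (fun m hm => hw m hm))
    exact h3
  -- the spanning finset
  set box : Finset (Fin d →₀ ℕ) :=
    (Finset.univ : Finset (Fin d → Fin (M + 1))).image
      (fun u => Finsupp.equivFunOnFinite.symm (fun i => (u i : ℕ))) with hbox
  set s : Finset (MvPolynomial (Fin d) k) := box.image (fun u => monomial u (1:k)) with hs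
  set V : Submodule k (MvPolynomial (Fin d) k) := Submodule.span k (s : Set (MvPolynomial (Fin d) k)) with hV
  -- each F v is in V
  have hdeg : ∀ v, (F v).totalDegree ≤ M := by
    intro v
    rw [hF]
    simp only
    rw [aeval_monomial, map_one, one_mul, hM, Finsupp.prod]
    refine le_trans (totalDegree_finset_prod _ _) ?_
    calc ∑ i ∈ (tf v).support, ((w i) ^ ((tf v) i)).totalDegree
        ≤ ∑ i ∈ (tf v).support, (tf v) i * D := by
          apply Finset.sum_le_sum
          intro i _
          exact le_trans (totalDegree_pow _ _) (Nat.mul_le_mul_left _ (hDbound i))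
      _ = (∑ i ∈ (tf v).support, (tf v) i) * D := by rw [Finset.sum_mul]
      _ ≤ N * D := by
          apply Nat.mul_le_mul_right
          have h4 : ∀ i, (tf v) i ≤ C := by
            intro i
            simp [htf]
            exact Nat.lt_succ_iff.mp (v i).2
          calc ∑ i ∈ (tf v).support, (tf v) i ≤ ∑ i : Fin (d+1), (tf v) i :=
                Finset.sum_le_sum_of_subset (Finset.subset_univ _)
            _ ≤ ∑ _i : Fin (d+1), C := Finset.sum_le_sum (fun i _ => h4 i)
            _ = (d + 1) * C := by simp [Finset.sum_const, Finset.card_univ, Nat.mul_comm]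
            _ = N := hN.symm
  have hmemV : ∀ v, F v ∈ V := by
    intro v
    have hrepr := support_sum_monomial_coeff (F v)
    rw [← hrepr]
    apply Submodule.sum_mem
    intro u hu
    have hub : ∀ i : Fin d, u i ≤ M := by
      intro i
      have h5 : u i ≤ u.sum fun _ e => e := by
        rw [Finsupp.sum_fintype _ _ (fun _ => rfl)]
        exact Finset.single_le_sum (f := fun j => u j) (fun _ _ => Nat.zero_le _) (Finset.mem_univ i)
      exact le_trans (le_trans h5 (le_totalDegree hu)) (hdeg v)
    have humem : u ∈ box := by
      rw [hbox, Finset.mem_image]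
      refine ⟨fun i => ⟨u i, Nat.lt_succ_iff.mpr (hub i)⟩, Finset.mem_univ _, ?_⟩
      ext i
      simp
    have : (monomial u) (coeff u (F v)) = coeff u (F v) • (monomial u (1:k)) := by
      rw [smul_monomial, smul_eq_mul, mul_one]
    rw [this]
    exact Submodule.smul_mem _ _ (Submodule.subset_span (by rw [hs]; exact Finset.mem_image_of_mem _ humem))
  -- the card bound
  have hfin : FiniteDimensional k V := FiniteDimensional.span_of_finite k (s.finite_toSet)
  have hcard : Fintype.card (Fin (d + 1) → Fin (C + 1)) ≤ Module.finrank k V := by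
    set F' : (Fin (d + 1) → Fin (C + 1)) → V := fun v => ⟨F v, hmemV v⟩ with hF'
    have hli' : LinearIndependent k F' := by
      apply LinearIndependent.of_comp V.subtype
      exact hFli
    exact hli'.fintype_card_le_finrank
  have hrank : Module.finrank k V ≤ s.card := finrank_span_finset_le_card s
  have hcount : (C + 1) ^ (d + 1) ≤ (M + 1) ^ d := by
    calc (C + 1) ^ (d + 1) = Fintype.card (Fin (d + 1) → Fin (C + 1)) := by
          rw [Fintype.card_fun]; simp
      _ ≤ Module.finrank k V := hcard
      _ ≤ s.card := hrank
      _ ≤ box.card := Finset.card_image_le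
      _ ≤ (Finset.univ : Finset (Fin d → Fin (M + 1))).card := Finset.card_image_le
      _ = (M + 1) ^ d := by rw [Finset.card_univ, Fintype.card_fun]; simp
  -- arithmetic contradiction
  have harith : (M + 1) ^ d < (C + 1) ^ (d + 1) := by
    have h6 : M + 1 ≤ (C + 1) * ((d + 1) * D) := by
      rw [hM, hN]
      nlinarith [hDpos, hCpos]
    calc (M + 1) ^ d ≤ ((C + 1) * ((d + 1) * D)) ^ d := Nat.pow_le_pow_left h6 d
      _ = (C + 1) ^ d * ((d + 1) * D) ^ d := by rw [mul_pow]
      _ = (C + 1) ^ d * C := by rw [hC]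
      _ < (C + 1) ^ d * (C + 1) := by
          have hpos : 0 < (C + 1) ^ d := Nat.pow_pos (Nat.succ_pos _)
          exact mul_lt_mul_of_pos_left (Nat.lt_succ_self C) hpos
      _ = (C + 1) ^ (d + 1) := by rw [pow_succ]
  omega




lemma mdeg_zero {d : ℕ} : mdeg (0 : Fin d →₀ ℕ) = 0 := by
  simp [mdeg]

lemma monomial_mul_monomial {d : ℕ} {k : Type*} [Field k] (u v : Fin d →₀ ℕ) :
    (monomial u (1:k)) * monomial v (1:k) = monomial (u + v) (1:k) := by
  rw [monomial_mul, one_mul]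

lemma X_eq_monomial {d : ℕ} {k : Type*} [Field k] (i : Fin d) :
    (X i : MvPolynomial (Fin d) k) = monomial (Finsupp.single i 1) (1:k) := by
  rw [← X_pow_eq_monomial, pow_one]

lemma pow_span_X {d : ℕ} {k : Type*} [Field k] (n : ℕ) :
    (Ideal.span (Set.range (X : Fin d → MvPolynomial (Fin d) k))) ^ n
      = Ideal.span ((fun v => monomial v (1:k)) '' {v : Fin d →₀ ℕ | mdeg v = n}) := by
  induction n with
  | zero =>
    rw [pow_zero]
    have h0 : {v : Fin d →₀ ℕ | mdeg v = 0} = {0} := by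
      ext v
      constructor
      · intro hv; exact mdeg_eq_zero hv
      · rintro rfl; exact mdeg_zero
    rw [h0]
    rw [Set.image_singleton, Ideal.one_eq_top]
    rw [monomial_zero', C_1]
    exact (Ideal.span_singleton_one).symm
  | succ n ih =>
    rw [pow_succ, ih, Ideal.span_mul_span]
    apply le_antisymm
    · rw [Ideal.span_le]
      intro x hx
      simp only [Set.mem_mul, Set.mem_singleton_iff] at hx
      obtain ⟨s, ⟨v, hv, rfl⟩, r, ⟨i, rfl⟩, rfl⟩ := hx
      rw [X_eq_monomial, monomial_mul_monomial]
      apply Ideal.subset_span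
      exact ⟨v + Finsupp.single i 1, by rw [Set.mem_setOf_eq, mdeg_add, mdeg_single, hv], rfl⟩
    · rw [Ideal.span_le]
      rintro _ ⟨u, hu, rfl⟩
      rw [Set.mem_setOf_eq] at hu
      have hune : u ≠ 0 := by
        intro h; rw [h, mdeg_zero] at hu; omega
      obtain ⟨i, hi⟩ := Finsupp.support_nonempty_iff.mpr hune
      have hile : Finsupp.single i 1 ≤ u :=
        Finsupp.single_le_iff.mpr (Nat.one_le_iff_ne_zero.mpr (Finsupp.mem_support_iff.mp hi))
      have hsplit : (u - Finsupp.single i 1) + Finsupp.single i 1 = u := tsub_add_cancel_of_le hile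
      have hdeg' : mdeg (u - Finsupp.single i 1) = n := by
        have := mdeg_add (u - Finsupp.single i 1) (Finsupp.single i 1)
        rw [hsplit, mdeg_single, hu] at this
        omega
      have heq : monomial u (1:k) = monomial (u - Finsupp.single i 1) (1:k) * X i := by
        rw [X_eq_monomial, monomial_mul_monomial, hsplit]
      show monomial u (1:k) ∈ _
      rw [heq]
      apply Ideal.subset_span
      simp only [Set.mem_mul]
      exact ⟨monomial (u - Finsupp.single i 1) (1:k), ⟨u - Finsupp.single i 1, hdeg', rfl⟩,
        X i, ⟨i, rfl⟩, rfl⟩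

end Aux

open Aux

/-- If `L` is a lex-segment ideal of height `g` with `2 ≤ g < d` generated in
degree `δ ≥ 2`, then `L = I + x_g·L'` where `I ⊆ (x_1,…,x_{g-1})` is a monomial ideal
containing `(x_1,…,x_{g-1})·m^{δ-1}` and `L'` is a monomial ideal whose generators involve
only the variables `x_g,…,x_d`. -/
theorem stmt_6 {d : ℕ} {k : Type*} [Field k] (g δ : ℕ)
    (hg : 2 ≤ g) (hgd : g < d) (hδ : 2 ≤ δ)
    (L : Ideal (MvPolynomial (Fin d) k)) (hL : IsLexSegment δ L)
    (hht : idealHeight L = (g : ℕ∞)) :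
    ∃ I L' : Ideal (MvPolynomial (Fin d) k),
      IsMonomialIdeal I ∧
      I ≤ Ideal.span {p | ∃ i : Fin d, (i : ℕ) < g - 1 ∧ p = X i} ∧
      Ideal.span {p : MvPolynomial (Fin d) k | ∃ i : Fin d, (i : ℕ) < g - 1 ∧ p = X i} *
        (Ideal.span (Set.range (X : Fin d → MvPolynomial (Fin d) k))) ^ (δ - 1) ≤ I ∧
      (∃ S : Set (Fin d →₀ ℕ),
        L' = Ideal.span ((fun v => monomial v (1 : k)) '' S) ∧
        ∀ v ∈ S, ∀ i : Fin d, v i ≠ 0 → g - 1 ≤ (i : ℕ)) ∧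
      L = I + Ideal.span {X (⟨g - 1, by omega⟩ : Fin d)} * L' := by
  classical
  obtain ⟨⟨S, hSdeg, hLspan⟩, hlex⟩ := hL
  -- the saturated generating set
  set T : Set (Fin d →₀ ℕ) := {v | mdeg v = δ ∧ monomial v (1:k) ∈ L} with hT
  have hLT : L = Ideal.span ((fun v => monomial v (1:k)) '' T) := by
    apply le_antisymm
    · conv_lhs => rw [hLspan]
      apply Ideal.span_mono
      rintro _ ⟨v, hv, rfl⟩
      exact ⟨v, ⟨hSdeg v hv, hLspan ▸ Ideal.subset_span ⟨v, hv, rfl⟩⟩, rfl⟩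
    · rw [Ideal.span_le]
      rintro _ ⟨v, hv, rfl⟩
      exact hv.2
  have hTlex : ∀ u w : Fin d →₀ ℕ, u ∈ T → mdeg w = δ → lexLt u w → w ∈ T :=
    fun u w hu hw hl => ⟨hw, hlex u w hu.1 hw hu.2 hl⟩
  -- both directions of the height hypothesis
  have hht_lb : ∀ p : PrimeSpectrum (MvPolynomial (Fin d) k), L ≤ p.asIdeal →
      (g : ℕ∞) ≤ Order.height p := by
    intro p hp
    rw [← hht, idealHeight]
    exact biInf_le Order.height hp
  have hht_ub : ¬ (∀ p : PrimeSpectrum (MvPolynomial (Fin d) k), L ≤ p.asIdeal →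
      ((g : ℕ) + 1 : ℕ∞) ≤ Order.height p) := by
    intro hc
    have h1 : ((g : ℕ) + 1 : ℕ∞) ≤ idealHeight L := le_iInf₂ hc
    rw [hht] at h1
    have := ENat.coe_lt_coe.mpr (Nat.lt_succ_self g)
    exact absurd h1 (by
      push_cast
      exact not_le_of_gt (by exact_mod_cast Nat.lt_succ_self g))
  -- FACT 2 : every monomial of T involves a variable of index < g
  have fact2 : ∀ v ∈ T, ∃ i : Fin d, (i : ℕ) < g ∧ v i ≠ 0 := by
    intro v hv
    by_contra hbad
    push_neg at hbad
    have hsingles : ∀ i : Fin d, (i : ℕ) ≤ g → Finsupp.single i δ ∈ T := by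
      intro i hi
      by_cases hveq : v = Finsupp.single i δ
      · rw [← hveq]; exact hv
      · apply hTlex v _ hv (mdeg_single i δ)
        refine ⟨i, ?_, ?_⟩
        · rw [Finsupp.single_eq_same]
          have hle := le_mdeg v i
          have hmv : mdeg v = δ := hv.1
          rcases Nat.lt_or_ge (v i) δ with h2 | h2
          · exact h2
          · exfalso
            have hvi : v i = mdeg v := by omega
            have h3 := eq_single_of_apply_eq_mdeg hvi
            rw [hmv] at h3
            exact hveq h3
        · intro l hl
          have hli : (l : ℕ) < (i : ℕ) := hl
          have hlg : (l : ℕ) < g := by omega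
          have hil : i ≠ l := fun hh => absurd (congrArg Fin.val hh) (by omega)
          rw [hbad l hlg, Finsupp.single_eq_of_ne' hil]
    apply hht_ub
    intro p hp
    apply height_ge_of_vars (by omega : g + 1 ≤ d)
    intro i hi
    have hmem : monomial (Finsupp.single i δ) (1:k) ∈ L := (hsingles i (by omega)).2
    have hpow : (X i : MvPolynomial (Fin d) k) ^ δ ∈ p.asIdeal := by
      rw [X_pow_eq_monomial]
      exact hp hmem
    exact p.2.mem_of_pow_mem δ hpow
  -- the distinguished minimal monomial
  have hg2d : g - 2 < d := by omega
  have hd1d : d - 1 < d := by omega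
  set j : Fin d := ⟨g - 2, hg2d⟩ with hj
  set e : Fin d := ⟨d - 1, hd1d⟩ with he
  have hje : j ≠ e := by
    intro h
    have := congrArg (fun x : Fin d => (x : ℕ)) h
    simp [hj, he] at this
    omega
  set w0 : Fin d →₀ ℕ := Finsupp.single j 1 + Finsupp.single e (δ - 1) with hw0
  have hw0deg : mdeg w0 = δ := by
    rw [hw0, mdeg_add, mdeg_single, mdeg_single]; omega
  have hw0j : w0 j = 1 := by
    rw [hw0, Finsupp.add_apply, Finsupp.single_eq_same, Finsupp.single_eq_of_ne' (Ne.symm hje)]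
    omega
  have hw0e : w0 e = δ - 1 := by
    rw [hw0, Finsupp.add_apply, Finsupp.single_eq_same, Finsupp.single_eq_of_ne' hje]
    omega
  have hw0other : ∀ l : Fin d, l ≠ j → l ≠ e → w0 l = 0 := by
    intro l hlj hle
    rw [hw0, Finsupp.add_apply, Finsupp.single_eq_of_ne' (Ne.symm hlj), Finsupp.single_eq_of_ne' (Ne.symm hle)]
    omega
  -- step A : w0 ∈ T  (this is where the height lower bound is used)
  have stepA : w0 ∈ T := by
    by_contra hnw0
    -- L is contained in the span of the first g-1 variables
    have hLP : L ≤ Ideal.span (X '' {i : Fin d | (i : ℕ) < g - 1} :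
        Set (MvPolynomial (Fin d) k)) := by
      rw [hLT, Ideal.span_le]
      rintro _ ⟨v, hv, rfl⟩
      rw [SetLike.mem_coe, mem_ideal_span_X_image]
      intro m hm
      rw [support_monomial, if_neg (one_ne_zero)] at hm
      rw [Finset.mem_singleton] at hm
      rw [hm]
      have hvw : v ≠ w0 := fun h => hnw0 (h ▸ hv)
      have hnl : ¬ lexLt v w0 := fun hl => hnw0 (hTlex v w0 hv hw0deg hl)
      have hl : lexLt w0 v := (lex_total hvw).resolve_left hnl
      obtain ⟨i2, hi2lt, hi2eq⟩ := hl
      by_cases hcase : (i2 : ℕ) ≤ g - 2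
      · refine ⟨i2, ?_, ?_⟩
        · simp only [Set.mem_setOf_eq]
          omega
        · omega
      · refine ⟨j, by simp [hj]; omega, ?_⟩
        have hji2 : j < i2 := by
          rw [Fin.lt_def]
          simp [hj]
          omega
        have : w0 j = v j := hi2eq j hji2
        rw [← this, hw0j]
        exact one_ne_zero
    -- extract a chain of length g below that prime
    set P : PrimeSpectrum (MvPolynomial (Fin d) k) :=
      ⟨Ideal.span (X '' {i : Fin d | (i : ℕ) < g - 1}), isPrime_spanX _⟩ with hP
    have hhP : ((g : ℕ) : ℕ∞) ≤ Order.height P := hht_lb P hLP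
    obtain ⟨c, hclast, hclen⟩ := Order.exists_series_of_le_height P hhP
    -- base independence
    set m0 : ℕ := d - (g - 1) with hm0
    have hembw : ∀ l : Fin m0, g - 1 + (l : ℕ) < d := by
      intro l
      have := l.2
      omega
    set emb : Fin m0 → Fin d := fun l => ⟨g - 1 + (l : ℕ), hembw l⟩ with hemb
    have hbase : Indep c.last.asIdeal (fun l => X (emb l)) := by
      rw [hclast]
      apply indep_base (s := {i : Fin d | (i : ℕ) < g - 1}) _ le_rfl emb
      · intro a b hab
        have : (emb a : ℕ) = (emb b : ℕ) := congrArg _ hab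
        simp [hemb] at this
        exact Fin.ext this
      · intro l
        simp [hemb]
    obtain ⟨wfam, hwfam⟩ := chain_indep g c hclen _ hbase
    have hcast : d + 1 = g + m0 := by omega
    apply no_indep_everything (wfam ∘ Fin.cast hcast)
    intro Q hQ
    refine indep_comp_cast hcast wfam hwfam Q ?_
    rw [hQ]
    exact Ideal.zero_mem _
  -- FACT 1 : every degree-δ monomial involving a variable of index < g-1 is in T
  have fact1 : ∀ u : Fin d →₀ ℕ, mdeg u = δ → (∃ i : Fin d, (i : ℕ) < g - 1 ∧ u i ≠ 0) →
      u ∈ T := by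
    rintro u hudeg ⟨i0, hi0lt, hi0ne⟩
    by_cases hueq : u = w0
    · rw [hueq]; exact stepA
    · apply hTlex w0 u stepA hudeg
      rcases lex_total hueq with hl | hl
      · exfalso
        obtain ⟨i, hlt, hbelow⟩ := hl
        have hiw0 : w0 i ≠ 0 := by omega
        have hij : i = j ∨ i = e := by
          by_contra hc
          push_neg at hc
          exact hiw0 (hw0other i hc.1 hc.2)
        rcases hij with rfl | rfl
        · -- i = j, so u j = 0 and everything below j agrees with w0 (hence is 0)
          have huj : u j = 0 := by
            have := hw0j
            omega
          have hi0j : (i0 : ℕ) ≤ (j : ℕ) := by simp [hj]; omega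
          rcases Nat.lt_or_ge (i0 : ℕ) (j : ℕ) with h | h
          · have : u i0 = w0 i0 := hbelow i0 (by rw [Fin.lt_def]; exact h)
            have hi0e : i0 ≠ e := by
              intro hcc
              have := congrArg (fun x : Fin d => (x : ℕ)) hcc
              simp [he] at this
              omega
            have hi0j' : i0 ≠ j := by
              intro hcc
              have := congrArg (fun x : Fin d => (x : ℕ)) hcc
              simp [hj] at this
              omega
            rw [hw0other i0 hi0j' hi0e] at this
            exact hi0ne this
          · have : i0 = j := Fin.ext (by omega)
            rw [this] at hi0ne
            exact hi0ne huj
        · -- i = e : everything except the last variable agrees, contradiction on degrees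
          have hue : u e < δ - 1 := by
            have := hw0e
            omega
          have hagree : ∀ l : Fin d, l ≠ e → u l = w0 l := by
            intro l hle
            apply hbelow
            rw [Fin.lt_def]
            have := l.2
            have : (l : ℕ) ≠ d - 1 := by
              intro hcc
              exact hle (Fin.ext (by simp [he]; omega))
            simp [he]
            omega
          have hsum_u : mdeg u = (∑ l ∈ Finset.univ.erase e, u l) + u e := by
            rw [mdeg_eq_sum, ← Finset.sum_erase_add _ _ (Finset.mem_univ e)]
          have hsum_w : mdeg w0 = (∑ l ∈ Finset.univ.erase e, w0 l) + w0 e := by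
            rw [mdeg_eq_sum, ← Finset.sum_erase_add _ _ (Finset.mem_univ e)]
          have heq_sum : ∑ l ∈ Finset.univ.erase e, u l = ∑ l ∈ Finset.univ.erase e, w0 l :=
            Finset.sum_congr rfl (fun l hl => hagree l (Finset.ne_of_mem_erase hl))
          rw [hudeg] at hsum_u
          rw [hw0deg, hw0e] at hsum_w
          omega
      · exact hl
  -- the ideal decomposition
  set A : Set (Fin d) := {i : Fin d | (i : ℕ) < g - 1} with hA
  have hAset : {p : MvPolynomial (Fin d) k | ∃ i : Fin d, (i : ℕ) < g - 1 ∧ p = X i}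
      = X '' A := by
    ext p
    constructor
    · rintro ⟨i, hi, rfl⟩; exact ⟨i, hi, rfl⟩
    · rintro ⟨i, hi, rfl⟩; exact ⟨i, hi, rfl⟩
  set TA : Set (Fin d →₀ ℕ) := {v | v ∈ T ∧ ∃ i : Fin d, (i : ℕ) < g - 1 ∧ v i ≠ 0} with hTA
  have htlt : g - 1 < d := by omega
  set t : Fin d := ⟨g - 1, htlt⟩ with ht
  set S' : Set (Fin d →₀ ℕ) :=
    (fun v => v - Finsupp.single t 1) '' {v | v ∈ T ∧ ∀ i : Fin d, (i : ℕ) < g - 1 → v i = 0}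
    with hS'
  -- auxiliary: monomials of T avoiding A are divisible by x_t
  have hdiv : ∀ v : Fin d →₀ ℕ, v ∈ T → (∀ i : Fin d, (i : ℕ) < g - 1 → v i = 0) →
      v t ≠ 0 := by
    intro v hv hvA
    obtain ⟨i, hig, hine⟩ := fact2 v hv
    have : (i : ℕ) = g - 1 := by
      rcases Nat.lt_or_ge (i : ℕ) (g - 1) with h | h
      · exact absurd (hvA i h) hine
      · omega
    have : i = t := Fin.ext (by simp [ht]; omega)
    rw [← this]
    exact hine
  have hmono_split : ∀ v : Fin d →₀ ℕ, v t ≠ 0 →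
      monomial v (1:k) = X t * monomial (v - Finsupp.single t 1) (1:k) := by
    intro v hvt
    have hle : Finsupp.single t 1 ≤ v := Finsupp.single_le_iff.mpr (by omega)
    have hsplit : (v - Finsupp.single t 1) + Finsupp.single t 1 = v := tsub_add_cancel_of_le hle
    have hcomm : Finsupp.single t 1 + (v - Finsupp.single t 1) = v := by
      rw [add_comm]; exact hsplit
    rw [X_eq_monomial, monomial_mul_monomial, hcomm]
  refine ⟨Ideal.span ((fun v => monomial v (1:k)) '' TA),
    Ideal.span ((fun v => monomial v (1:k)) '' S'),
    ⟨TA, rfl⟩, ?_, ?_, ⟨S', rfl, ?_⟩, ?_⟩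
  · -- I ≤ span of first g-1 variables
    rw [hAset, Ideal.span_le]
    rintro _ ⟨v, hv, rfl⟩
    rw [SetLike.mem_coe, mem_ideal_span_X_image]
    intro m hm
    rw [support_monomial, if_neg (one_ne_zero), Finset.mem_singleton] at hm
    subst hm
    obtain ⟨i, hi, hine⟩ := hv.2
    exact ⟨i, hi, hine⟩
  · -- P * m^{δ-1} ≤ I
    rw [hAset, pow_span_X, Ideal.span_mul_span, Ideal.span_le]
    intro x hx
    simp only [Set.mem_mul, Set.mem_singleton_iff] at hx
    obtain ⟨s, ⟨i, hiA, rfl⟩, r, ⟨v, hvdeg, rfl⟩, rfl⟩ := hx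
    rw [Set.mem_setOf_eq] at hvdeg
    rw [X_eq_monomial, monomial_mul_monomial]
    apply Ideal.subset_span
    refine ⟨Finsupp.single i 1 + v, ⟨?_, ⟨i, hiA, ?_⟩⟩, rfl⟩
    · apply fact1
      · rw [mdeg_add, mdeg_single, hvdeg]; omega
      · refine ⟨i, hiA, ?_⟩
        rw [Finsupp.add_apply, Finsupp.single_eq_same]
        omega
    · rw [Finsupp.add_apply, Finsupp.single_eq_same]
      omega
  · -- generators of L' avoid the first g-1 variables
    rintro _ ⟨v, ⟨hvT, hvA⟩, rfl⟩ i hine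
    by_contra hc
    push_neg at hc
    exact hine (by simp [Finsupp.tsub_apply, hvA i hc])
  · -- the decomposition L = I + (x_t) * L'
    apply le_antisymm
    · rw [hLT, Ideal.span_le]
      rintro _ ⟨v, hv, rfl⟩
      by_cases hcase : ∃ i : Fin d, (i : ℕ) < g - 1 ∧ v i ≠ 0
      · exact Submodule.mem_sup_left (Ideal.subset_span ⟨v, ⟨hv, hcase⟩, rfl⟩)
      · push_neg at hcase
        have hvA : ∀ i : Fin d, (i : ℕ) < g - 1 → v i = 0 := hcase
        have hvt := hdiv v hv hvA
        show monomial v (1:k) ∈ _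
        rw [hmono_split v hvt]
        apply Submodule.mem_sup_right
        exact Ideal.mul_mem_mul (Ideal.subset_span rfl)
          (Ideal.subset_span ⟨v - Finsupp.single t 1, ⟨v, ⟨hv, hvA⟩, rfl⟩, rfl⟩)
    · apply sup_le
      · rw [hLT]
        apply Ideal.span_mono
        exact Set.image_mono (fun v hv => hv.1)
      · rw [Ideal.span_mul_span, Ideal.span_le]
        intro x hx
        simp only [Set.mem_mul, Set.mem_singleton_iff] at hx
        obtain ⟨s, hs, r, ⟨v', ⟨v, ⟨hvT, hvA⟩, rfl⟩, rfl⟩, rfl⟩ := hx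
        subst hs
        have hvt := hdiv v hvT hvA
        show X t * monomial (v - Finsupp.single t 1) (1:k) ∈ (L : Set (MvPolynomial (Fin d) k))
        rw [SetLike.mem_coe, ← hmono_split v hvt]
        exact hvT.2
end

section
/- Let R = k[x_1,…,x_d] over a field k, with d ≥ 2, 2 ≤ g ≤ d, δ ≥ 2. Let J_2 = (x_1^δ, …, x_g^δ) + (x_1,…,x_g)·(x_{g+1}^{δ-1},…,x_d^{δ-1}). Then the monomial β = x_1^{dδ-1}·x_2^{δ-1}⋯x_g^{δ-1}·x_{g+1}^{δ-2}⋯x_d^{δ-2} does not belong to J_2^d. -/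
open MvPolynomial

lemma aux_prod_X_pow {k : Type*} [CommSemiring k] {σ : Type*} [DecidableEq σ]
    (s : Finset σ) (e : σ → ℕ) :
    (∏ i ∈ s, (X i : MvPolynomial σ k) ^ e i) =
      monomial (∑ i ∈ s, Finsupp.single i (e i)) (1 : k) := by
  induction s using Finset.induction with
  | empty => simp
  | @insert a s h ih =>
      rw [Finset.prod_insert h, Finset.sum_insert h, ih, X_pow_eq_monomial,
        monomial_mul, one_mul]

/-- With `J_2 = (x_1^δ,…,x_g^δ) + (x_1,…,x_g)·(x_{g+1}^{δ-1},…,x_d^{δ-1})`,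
the monomial `β = x_1^{dδ-1}·x_2^{δ-1}⋯x_g^{δ-1}·x_{g+1}^{δ-2}⋯x_d^{δ-2}` does not lie in
`J_2^d`. -/
theorem stmt_7 {d : ℕ} {k : Type*} [Field k] (g δ : ℕ)
    (hd : 2 ≤ d) (hg2 : 2 ≤ g) (hgd : g ≤ d) (hδ : 2 ≤ δ) :
    (∏ i : Fin d, (X i : MvPolynomial (Fin d) k) ^
        (if (i : ℕ) = 0 then d * δ - 1 else if (i : ℕ) < g then δ - 1 else δ - 2)) ∉
      (Ideal.span {p : MvPolynomial (Fin d) k | ∃ i : Fin d, (i : ℕ) < g ∧ p = X i ^ δ} +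
        Ideal.span {p : MvPolynomial (Fin d) k | ∃ i : Fin d, (i : ℕ) < g ∧ p = X i} *
          Ideal.span {p : MvPolynomial (Fin d) k |
            ∃ j : Fin d, g ≤ (j : ℕ) ∧ p = X j ^ (δ - 1)}) ^ d := by
  classical
  intro hmem
  set e : Fin d → ℕ :=
    fun i => if (i : ℕ) = 0 then d * δ - 1 else if (i : ℕ) < g then δ - 1 else δ - 2 with he
  set B : Fin d →₀ ℕ := ∑ i : Fin d, Finsupp.single i (e i) with hBdef
  have hBapp : ∀ j : Fin d, B j = e j := by
    intro j
    rw [hBdef]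
    rw [Finsupp.finset_sum_apply]
    simp [Finsupp.single_apply]
  set i0 : Fin d := ⟨0, by omega⟩ with hi0
  have hi0v : (i0 : ℕ) = 0 := rfl
  set mon : (Fin d →₀ ℕ) → MvPolynomial (Fin d) k := fun s => monomial s (1 : k) with hmon
  set E : Set (Fin d →₀ ℕ) :=
    {s | (∃ i : Fin d, (i : ℕ) < g ∧ s = Finsupp.single i δ) ∨
      ∃ i j : Fin d, (i : ℕ) < g ∧ g ≤ (j : ℕ) ∧
        s = Finsupp.single i 1 + Finsupp.single j (δ - 1)} with hE
  -- the ideal is contained in the span of monomials with exponents in E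
  have hJle : (Ideal.span {p : MvPolynomial (Fin d) k | ∃ i : Fin d, (i : ℕ) < g ∧ p = X i ^ δ} +
        Ideal.span {p : MvPolynomial (Fin d) k | ∃ i : Fin d, (i : ℕ) < g ∧ p = X i} *
          Ideal.span {p : MvPolynomial (Fin d) k |
            ∃ j : Fin d, g ≤ (j : ℕ) ∧ p = X j ^ (δ - 1)}) ≤ Ideal.span (mon '' E) := by
    apply sup_le
    · apply Ideal.span_le.2
      rintro p ⟨i, hig, rfl⟩
      exact Ideal.subset_span ⟨Finsupp.single i δ, Or.inl ⟨i, hig, rfl⟩,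
        X_pow_eq_monomial.symm⟩
    · rw [Ideal.span_mul_span]
      apply Ideal.span_le.2
      rintro p hp
      simp only [Set.mem_iUnion, Set.mem_singleton_iff, Set.mem_mul, Set.mem_setOf_eq] at hp
      obtain ⟨x, ⟨i, hig, rfl⟩, y, ⟨j, hjg, rfl⟩, rfl⟩ := hp
      refine Ideal.subset_span ⟨Finsupp.single i 1 + Finsupp.single j (δ - 1),
        Or.inr ⟨i, j, hig, hjg, rfl⟩, ?_⟩
      rw [hmon]
      rw [show (X i : MvPolynomial (Fin d) k) = X i ^ 1 from (pow_one _).symm,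
        X_pow_eq_monomial, X_pow_eq_monomial, monomial_mul, one_mul]
  -- T n : n-fold sums of elements of E
  set T : ℕ → Set (Fin d →₀ ℕ) :=
    fun n => {s | ∃ f : Fin n → (Fin d →₀ ℕ), (∀ i, f i ∈ E) ∧ s = ∑ i, f i} with hT
  have hpow : ∀ n : ℕ, (Ideal.span (mon '' E)) ^ n ≤ Ideal.span (mon '' T n) := by
    intro n
    induction n with
    | zero =>
        rw [pow_zero, Ideal.one_eq_top, top_le_iff, Ideal.eq_top_iff_one]
        refine Ideal.subset_span ⟨0, ⟨fun i => i.elim0, fun i => i.elim0, by simp⟩, ?_⟩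
        simp [mon]
    | succ n ih =>
        rw [pow_succ]
        refine le_trans (Ideal.mul_mono ih le_rfl) ?_
        rw [Ideal.span_mul_span]
        apply Ideal.span_le.2
        rintro p hp
        simp only [Set.mem_iUnion, Set.mem_singleton_iff, Set.mem_mul] at hp
        obtain ⟨x, ⟨a, ⟨f, hf, rfl⟩, rfl⟩, y, ⟨b, hb, rfl⟩, rfl⟩ := hp
        refine Ideal.subset_span ⟨(∑ i, f i) + b, ⟨Fin.snoc f b, ?_, ?_⟩, ?_⟩
        · intro i
          refine Fin.lastCases ?_ ?_ i
          · simpa using hb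
          · intro i; simpa using hf i
        · rw [Fin.sum_univ_castSucc]
          simp
        · simp [mon, monomial_mul]
  -- the β monomial is `monomial B 1`
  have hβ : (∏ i : Fin d, (X i : MvPolynomial (Fin d) k) ^ e i) = monomial B (1 : k) := by
    rw [hBdef]; exact aux_prod_X_pow Finset.univ e
  rw [hβ] at hmem
  have hmem2 : monomial B (1 : k) ∈ Ideal.span (mon '' T d) :=
    (hpow d) ((Ideal.pow_right_mono hJle d) hmem)
  rw [hmon, mem_ideal_span_monomial_image] at hmem2
  have hBsupp : B ∈ (monomial B (1 : k)).support := by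
    rw [support_monomial, if_neg one_ne_zero]; exact Finset.mem_singleton_self B
  obtain ⟨s, hsT, hsB⟩ := hmem2 B hBsupp
  -- key combinatorial claim
  have key : ∀ n : ℕ, ∀ s : Fin d →₀ ℕ, s ∈ T n → s ≤ B → s = Finsupp.single i0 (n * δ) := by
    intro n
    induction n with
    | zero =>
        rintro s ⟨f, hf, rfl⟩ _
        simp
    | succ n ih =>
        rintro s ⟨f, hf, rfl⟩ hsB
        rw [Fin.sum_univ_castSucc] at hsB ⊢
        set b : Fin d →₀ ℕ := ∑ i : Fin n, f i.castSucc with hbdef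
        set a : Fin d →₀ ℕ := f (Fin.last n) with hadef
        have hbB : b ≤ B := le_trans (self_le_add_right b a) hsB
        have hbeq : b = Finsupp.single i0 (n * δ) :=
          ih b ⟨fun i => f i.castSucc, fun i => hf _, rfl⟩ hbB
        have haE : a ∈ E := hf _
        rcases haE with ⟨i, hig, haeq⟩ | ⟨i, j, hig, hjg, haeq⟩
        · -- type A generator
          by_cases hiz : (i : ℕ) = 0
          · have : i = i0 := Fin.ext (by rw [hiz, hi0v])
            subst this
            rw [hbeq, haeq, ← Finsupp.single_add]
            congr 1
            ring
          · exfalso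
            have hii0 : i0 ≠ i := fun h => hiz (by rw [← h, hi0v])
            have hbi : b i = 0 := by rw [hbeq]; simp [Finsupp.single_apply, hii0]
            have hai : a i = δ := by rw [haeq]; simp
            have h1 := hsB i
            rw [Finsupp.add_apply, hbi, hai, hBapp, he] at h1
            simp only [hiz, hig, if_true, if_false] at h1
            omega
        · -- type B generator: impossible
          exfalso
          have hij : i ≠ j := fun h => by omega
          have hi0j : i0 ≠ j := fun h => by
            have : (0 : ℕ) = (j : ℕ) := by rw [← hi0v, h]
            omega
          have hbj : b j = 0 := by rw [hbeq]; simp [Finsupp.single_apply, hi0j]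
          have haj : a j = δ - 1 := by
            rw [haeq, Finsupp.add_apply, Finsupp.single_apply, Finsupp.single_apply,
              if_neg hij, if_pos rfl, zero_add]
          have h1 := hsB j
          rw [Finsupp.add_apply, hbj, haj, hBapp, he] at h1
          have hj0 : ¬((j : ℕ) = 0) := by omega
          have hjlt : ¬((j : ℕ) < g) := by omega
          simp only [hj0, hjlt, if_false] at h1
          omega
  have hs := key d s hsT hsB
  have hfin : s i0 ≤ B i0 := hsB i0
  rw [hs, Finsupp.single_eq_same, hBapp, he] at hfin
  simp only [hi0v, if_true, if_pos] at hfin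
  have h1 : 4 ≤ d * δ := Nat.mul_le_mul hd hδ
  omega
end

section
/- Let R = k[x_1,…,x_d] over a field k of characteristic zero (or any field), m = (x_1,…,x_d), g an integer with 2 ≤ g ≤ d, and δ ≥ 2. Let J_1 = (x_1^δ,…,x_g^δ) + (x_1,…,x_{g-1})·(x_{g+1}^{δ-1},…,x_d^{δ-1}) and L_1 = (x_1,…,x_{g-1})·m^{δ-1} + (x_g^δ). Then the monomial x_1^{d(δ-2)+g}·x_1^{2d-g-1}·x_2^{δ-1}⋯x_g^{δ-1}·x_{g+1}^{δ-2}⋯x_d^{δ-2} lies in x_1^{d(δ-2)+g}·L_1^{d-1} but not in J_1^d. -/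
open MvPolynomial Pointwise

lemma aux_prod_mem_pow_card {R α : Type*} [CommRing R] (I : Ideal R) (s : Finset α)
    (f : α → R) (h : ∀ i ∈ s, f i ∈ I) : ∏ i ∈ s, f i ∈ I ^ s.card := by
  classical
  induction s using Finset.cons_induction with
  | empty => simp
  | cons a s ha ih =>
    rw [Finset.prod_cons, Finset.card_cons, pow_succ, mul_comm]
    exact Ideal.mul_mem_mul (h a (Finset.mem_cons_self a s))
      (ih fun i hi => h i (Finset.mem_cons_of_mem hi))

theorem part1 {d : ℕ} {k : Type*} [Field k] (g δ : ℕ)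
    (hg2 : 2 ≤ g) (hgd : g ≤ d) (hδ : 2 ≤ δ) :
    (∏ i : Fin d, (X i : MvPolynomial (Fin d) k) ^
        (if (i : ℕ) = 0 then d * δ - 1 else if (i : ℕ) < g then δ - 1 else δ - 2)) ∈
      Ideal.span {(X (⟨0, Nat.lt_of_lt_of_le (Nat.lt_of_lt_of_le Nat.zero_lt_two hg2) hgd⟩ : Fin d) : MvPolynomial (Fin d) k) ^ (d * (δ - 2) + g)} *
        (Ideal.span {p : MvPolynomial (Fin d) k | ∃ i : Fin d, (i : ℕ) < g - 1 ∧ p = X i} *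
            (Ideal.span (Set.range (X : Fin d → MvPolynomial (Fin d) k))) ^ (δ - 1) +
          Ideal.span {(X (⟨g - 1, Nat.lt_of_lt_of_le (Nat.sub_lt (Nat.lt_of_lt_of_le Nat.zero_lt_two hg2) Nat.one_pos) hgd⟩ : Fin d) : MvPolynomial (Fin d) k) ^ δ}) ^ (d - 1) := by
  classical
  have hd : 0 < d := by omega
  set z : Fin d := ⟨0, hd⟩ with hz
  set I : Ideal (MvPolynomial (Fin d) k) := Ideal.span (Set.range X) with hI
  set B : Ideal (MvPolynomial (Fin d) k) :=
    Ideal.span {p | ∃ i : Fin d, (i : ℕ) < g - 1 ∧ p = X i} with hB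
  set f : Fin d → MvPolynomial (Fin d) k := fun i =>
    X z ^ (if (i : ℕ) < g then 1 else 2) * X i ^ (if (i : ℕ) < g then δ - 1 else δ - 2) with hf
  have hXzB : (X z : MvPolynomial (Fin d) k) ∈ B := by
    exact Ideal.subset_span ⟨z, by simp [hz]; omega, rfl⟩
  have hXI : ∀ i : Fin d, (X i : MvPolynomial (Fin d) k) ∈ I := fun i =>
    Ideal.subset_span ⟨i, rfl⟩
  have hfL : ∀ i ∈ Finset.univ.erase z, f i ∈
      B * I ^ (δ - 1) + Ideal.span {(X (⟨g - 1, Nat.lt_of_lt_of_le (Nat.sub_lt (Nat.lt_of_lt_of_le Nat.zero_lt_two hg2) Nat.one_pos) hgd⟩ : Fin d) : MvPolynomial (Fin d) k) ^ δ} := by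
    intro i _
    rw [Submodule.add_eq_sup]
    apply Submodule.mem_sup_left
    by_cases hig : (i : ℕ) < g
    · have : f i = X z * X i ^ (δ - 1) := by rw [hf]; simp [hig]
      rw [this]
      exact Ideal.mul_mem_mul hXzB (Ideal.pow_mem_pow (hXI i) _)
    · have : f i = X z * (X z * X i ^ (δ - 2)) := by rw [hf]; simp [hig]; ring
      rw [this]
      refine Ideal.mul_mem_mul hXzB ?_
      have h2 : δ - 1 = 1 + (δ - 2) := by omega
      rw [h2, pow_add, pow_one]
      exact Ideal.mul_mem_mul (hXI z) (Ideal.pow_mem_pow (hXI i) _)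
  -- the sum of the auxiliary X z exponents
  have hsum : (∑ i ∈ Finset.univ.erase z, (if (i : ℕ) < g then 1 else 2)) = 2 * d - g - 1 := by
    have h1 : (∑ i : Fin d, (if (i : ℕ) < g then 1 else 2)) = 2 * d - g := by
      rw [Fin.sum_univ_eq_sum_range (fun j => if j < g then 1 else 2)]
      rw [← Finset.sum_range_add_sum_Ico _ hgd]
      have e1 : (∑ i ∈ Finset.range g, (if i < g then 1 else 2)) = g := by
        rw [Finset.sum_congr rfl (fun i hi => if_pos (Finset.mem_range.mp hi))]
        simp
      have e2 : (∑ i ∈ Finset.Ico g d, (if i < g then 1 else 2)) = 2 * (d - g) := by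
        rw [Finset.sum_congr rfl (fun i hi => if_neg (by
          have := (Finset.mem_Ico.mp hi).1; omega))]
        simp [Nat.card_Ico, mul_comm]
      rw [e1, e2]; omega
    have h2 := Finset.add_sum_erase Finset.univ
      (fun i : Fin d => if (i : ℕ) < g then 1 else 2) (Finset.mem_univ z)
    beta_reduce at h2
    have hzg : ((z : ℕ) < g) := by simp [hz]; omega
    rw [if_pos hzg] at h2
    omega
  -- the monomial identity
  have hexp : d * (δ - 2) + g + (2 * d - g - 1) = d * δ - 1 := by
    have h3 : d * (δ - 2) + 2 * d = d * δ := by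
      calc d * (δ - 2) + 2 * d = d * ((δ - 2) + 2) := by ring
      _ = d * δ := by rw [Nat.sub_add_cancel hδ]
    omega
  have hM : (∏ i : Fin d, (X i : MvPolynomial (Fin d) k) ^
        (if (i : ℕ) = 0 then d * δ - 1 else if (i : ℕ) < g then δ - 1 else δ - 2)) =
      X z ^ (d * (δ - 2) + g) * ∏ i ∈ Finset.univ.erase z, f i := by
    rw [hf]
    rw [Finset.prod_mul_distrib, Finset.prod_pow_eq_pow_sum, hsum]
    rw [← mul_assoc, ← pow_add, hexp]
    rw [← Finset.mul_prod_erase Finset.univ _ (Finset.mem_univ z)]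
    have hze : ((z : ℕ) = 0) := rfl
    rw [if_pos hze]
    congr 1
    refine Finset.prod_congr rfl fun i hi => ?_
    have : (i : ℕ) ≠ 0 := by
      intro h
      exact (Finset.mem_erase.mp hi).1 (Fin.ext (h.trans hze.symm))
    rw [if_neg this]
  rw [hM]
  refine Ideal.mul_mem_mul (Ideal.subset_span rfl) ?_
  have hcard : (Finset.univ.erase z).card = d - 1 := by
    rw [Finset.card_erase_of_mem (Finset.mem_univ z), Finset.card_univ, Fintype.card_fin]
  rw [← hcard]
  exact aux_prod_mem_pow_card _ _ _ hfL


open Pointwise in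
lemma aux_span_pow {R : Type*} [CommRing R] (s : Set R) (n : ℕ) :
    Ideal.span s ^ n = Ideal.span (s ^ n) := by
  induction n with
  | zero => simp [Ideal.one_eq_top, Ideal.span_one]
  | succ n ih => rw [pow_succ, pow_succ, ih, Ideal.span_mul_span']

lemma aux_prod_monomial {σ α k : Type*} [CommSemiring k] (s : Finset α) (E : α → (σ →₀ ℕ)) :
    ∏ i ∈ s, (monomial (E i) (1 : k)) = monomial (∑ i ∈ s, E i) 1 := by
  classical
  induction s using Finset.cons_induction with
  | empty => simp [MvPolynomial.monomial_zero']
  | cons a s ha ih =>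
    rw [Finset.prod_cons, Finset.sum_cons, ih, monomial_mul, one_mul]

theorem part2 {d : ℕ} {k : Type*} [Field k] (g δ : ℕ)
    (hg2 : 2 ≤ g) (hgd : g ≤ d) (hδ : 2 ≤ δ) :
    (∏ i : Fin d, (X i : MvPolynomial (Fin d) k) ^
        (if (i : ℕ) = 0 then d * δ - 1 else if (i : ℕ) < g then δ - 1 else δ - 2)) ∉
      (Ideal.span {p : MvPolynomial (Fin d) k | ∃ i : Fin d, (i : ℕ) < g ∧ p = X i ^ δ} +
        Ideal.span {p : MvPolynomial (Fin d) k | ∃ i : Fin d, (i : ℕ) < g - 1 ∧ p = X i} *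
          Ideal.span {p : MvPolynomial (Fin d) k |
            ∃ j : Fin d, g ≤ (j : ℕ) ∧ p = X j ^ (δ - 1)}) ^ d := by
  classical
  have hd : 0 < d := by omega
  -- exponent function and its Finsupp version
  set e : Fin d → ℕ := fun i =>
    if (i : ℕ) = 0 then d * δ - 1 else if (i : ℕ) < g then δ - 1 else δ - 2 with he
  set μ : Fin d →₀ ℕ := Finsupp.equivFunOnFinite.symm e with hμ
  have hμa : ∀ i, μ i = e i := fun i => rfl
  -- set of generator exponents
  set S : Set (Fin d →₀ ℕ) := {s | (∃ i : Fin d, (i : ℕ) < g ∧ s = Finsupp.single i δ) ∨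
      (∃ i j : Fin d, (i : ℕ) < g - 1 ∧ g ≤ (j : ℕ) ∧
        s = Finsupp.single i 1 + Finsupp.single j (δ - 1))} with hS
  set T : Set (MvPolynomial (Fin d) k) := (fun s => monomial s (1 : k)) '' S with hT
  -- step 1 : the ideal is contained in (span T)^d
  have hle : (Ideal.span {p : MvPolynomial (Fin d) k | ∃ i : Fin d, (i : ℕ) < g ∧ p = X i ^ δ} +
        Ideal.span {p : MvPolynomial (Fin d) k | ∃ i : Fin d, (i : ℕ) < g - 1 ∧ p = X i} *
          Ideal.span {p : MvPolynomial (Fin d) k |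
            ∃ j : Fin d, g ≤ (j : ℕ) ∧ p = X j ^ (δ - 1)}) ≤ Ideal.span T := by
    rw [Submodule.add_eq_sup, Ideal.span_mul_span']
    apply sup_le
    · apply Ideal.span_le.mpr
      rintro p ⟨i, hi, rfl⟩
      exact Ideal.subset_span ⟨Finsupp.single i δ, Or.inl ⟨i, hi, rfl⟩,
        X_pow_eq_monomial.symm⟩
    · apply Ideal.span_le.mpr
      rintro p hp
      obtain ⟨a, ⟨i, hi, rfl⟩, b, ⟨j, hj, rfl⟩, rfl⟩ := hp
      refine Ideal.subset_span ⟨Finsupp.single i 1 + Finsupp.single j (δ - 1),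
        Or.inr ⟨i, j, hi, hj, rfl⟩, ?_⟩
      show (monomial (Finsupp.single i 1 + Finsupp.single j (δ - 1)) (1 : k)) = X i * X j ^ (δ - 1)
      rw [show (X i : MvPolynomial (Fin d) k) = X i ^ 1 from (pow_one _).symm,
        X_pow_eq_monomial, X_pow_eq_monomial, monomial_mul, one_mul]
  -- step 2 : M is a monomial
  have hM : (∏ i : Fin d, (X i : MvPolynomial (Fin d) k) ^
        (if (i : ℕ) = 0 then d * δ - 1 else if (i : ℕ) < g then δ - 1 else δ - 2)) =
      monomial μ (1 : k) := by
    have h1 : (monomial μ (1 : k)) = ∏ i : Fin d, X i ^ μ i := by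
      rw [monomial_eq, C_1, one_mul, Finsupp.prod]
      exact Finset.prod_subset (Finset.subset_univ _) (fun i _ hi => by
        rw [Finsupp.notMem_support_iff.mp hi, pow_zero])
    rw [h1]
    exact Finset.prod_congr rfl fun i _ => rfl
  intro hmem
  replace hmem := (Ideal.pow_right_mono hle d) hmem
  rw [aux_span_pow] at hmem
  -- step 3 : T ^ d consists of monomials whose exponent is a sum of d elements of S
  have hTd : (T ^ d : Set (MvPolynomial (Fin d) k)) ⊆
      (fun s => monomial s (1 : k)) '' {s | ∃ F : Fin d → (Fin d →₀ ℕ),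
        (∀ t, F t ∈ S) ∧ s = ∑ t, F t} := by
    intro x hx
    rw [Set.mem_pow] at hx
    obtain ⟨f, hf⟩ := hx
    choose E hES hEeq using fun t => (f t).2
    refine ⟨∑ t, E t, ⟨E, hES, rfl⟩, ?_⟩
    show (monomial (∑ t, E t) (1 : k)) = x
    rw [← aux_prod_monomial, ← hf, List.prod_ofFn]
    exact Finset.prod_congr rfl fun t _ => hEeq t
  replace hmem := Ideal.span_mono hTd hmem
  rw [hM, mem_ideal_span_monomial_image] at hmem
  obtain ⟨s, hsS, hsle⟩ := hmem μ (by rw [support_monomial]; simp)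
  obtain ⟨F, hFS, rfl⟩ := hsS
  have hμval : ∀ x : Fin d, μ x =
      if (x : ℕ) = 0 then d * δ - 1 else if (x : ℕ) < g then δ - 1 else δ - 2 := fun x => rfl
  have hb : ∀ x : Fin d, (∑ t, F t x) ≤ μ x := by
    intro x
    have h := hsle
    rw [Finsupp.le_def] at h
    simpa [Finsupp.finset_sum_apply] using h x
  have hbig : ∀ t x, F t x ≤ ∑ t', F t' x := fun t x =>
    Finset.single_le_sum (f := fun t' => F t' x) (fun _ _ => Nat.zero_le _) (Finset.mem_univ t)
  have hA : ∀ t, F t = Finsupp.single (⟨0, hd⟩ : Fin d) δ := by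
    intro t
    rcases hFS t with ⟨i, hi, hFt⟩ | ⟨i, j, hi, hj, hFt⟩
    · have hix : (i : ℕ) = 0 := by
        by_contra hix
        have h1 := (hbig t i).trans (hb i)
        rw [hFt, Finsupp.single_eq_same, hμval i, if_neg hix, if_pos hi] at h1
        omega
      rw [hFt]
      congr 1
      exact Fin.ext hix
    · exfalso
      have h1 := (hbig t j).trans (hb j)
      have hij : i ≠ j := by
        intro hij; rw [hij] at hi; omega
      have hj0 : (j : ℕ) ≠ 0 := by omega
      have hjg : ¬ (j : ℕ) < g := by omega
      rw [hFt, hμval j, if_neg hj0, if_neg hjg] at h1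
      rw [Finsupp.add_apply, Finsupp.single_eq_same,
        Finsupp.single_eq_of_ne' hij] at h1
      omega
  have hz := hb ⟨0, hd⟩
  have hsum : (∑ t : Fin d, F t ⟨0, hd⟩) = d * δ := by
    rw [Finset.sum_congr rfl (fun t _ => by rw [hA t, Finsupp.single_eq_same])]
    simp [Finset.card_univ, mul_comm]
  rw [hsum, hμval ⟨0, hd⟩, if_pos rfl] at hz
  have : 0 < d * δ := Nat.mul_pos hd (by omega)
  omega

/-- With `J_1 = (x_1^δ,…,x_g^δ) + (x_1,…,x_{g-1})·(x_{g+1}^{δ-1},…,x_d^{δ-1})`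
and `L_1 = (x_1,…,x_{g-1})·m^{δ-1} + (x_g^δ)`, the monomial
`x_1^{d(δ-2)+g}·x_1^{2d-g-1}·x_2^{δ-1}⋯x_g^{δ-1}·x_{g+1}^{δ-2}⋯x_d^{δ-2}
  = x_1^{dδ-1}·x_2^{δ-1}⋯x_g^{δ-1}·x_{g+1}^{δ-2}⋯x_d^{δ-2}`
lies in `x_1^{d(δ-2)+g}·L_1^{d-1}` but not in `J_1^d`. -/
theorem stmt_17 {d : ℕ} {k : Type*} [Field k] (g δ : ℕ)
    (hg2 : 2 ≤ g) (hgd : g ≤ d) (hδ : 2 ≤ δ) :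
    (∏ i : Fin d, (X i : MvPolynomial (Fin d) k) ^
        (if (i : ℕ) = 0 then d * δ - 1 else if (i : ℕ) < g then δ - 1 else δ - 2)) ∈
      Ideal.span {(X (⟨0, by omega⟩ : Fin d) : MvPolynomial (Fin d) k) ^ (d * (δ - 2) + g)} *
        (Ideal.span {p : MvPolynomial (Fin d) k | ∃ i : Fin d, (i : ℕ) < g - 1 ∧ p = X i} *
            (Ideal.span (Set.range (X : Fin d → MvPolynomial (Fin d) k))) ^ (δ - 1) +
          Ideal.span {(X (⟨g - 1, by omega⟩ : Fin d) : MvPolynomial (Fin d) k) ^ δ}) ^ (d - 1) ∧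
    (∏ i : Fin d, (X i : MvPolynomial (Fin d) k) ^
        (if (i : ℕ) = 0 then d * δ - 1 else if (i : ℕ) < g then δ - 1 else δ - 2)) ∉
      (Ideal.span {p : MvPolynomial (Fin d) k | ∃ i : Fin d, (i : ℕ) < g ∧ p = X i ^ δ} +
        Ideal.span {p : MvPolynomial (Fin d) k | ∃ i : Fin d, (i : ℕ) < g - 1 ∧ p = X i} *
          Ideal.span {p : MvPolynomial (Fin d) k |
            ∃ j : Fin d, g ≤ (j : ℕ) ∧ p = X j ^ (δ - 1)}) ^ d := by
  exact ⟨part1 g δ hg2 hgd hδ, part2 g δ hg2 hgd hδ⟩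
end
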